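/- Let h : [0,T] → L(ℝ^r,ℝ^d) be continuous and bounded, and let (u_n) be a sequence in L²([0,T];ℝ^r) with ‖u_n‖²_{L²} ≤ 2γ for all n, converging weakly in L² to u with ‖u‖²_{L²} ≤ 2γ. Define Γ_n(t) = ∫₀ᵗ h(s)(u_n(s) − u(s)) ds. Then Γ_n → 0 uniformly on [0,T]. -/

import Mathlib

open MeasureTheory intervalIntegral Filter Topology
open scoped RealInnerProductSpace

lemma cs_aux {α : Type*} [MeasurableSpace α] (μ : Measure α) [IsFiniteMeasure μ]
    {g : α → ℝ} (hg : MemLp g 2 μ) :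
    ∫ x, ‖g x‖ ∂μ ≤ Real.sqrt (μ Set.univ).toReal * Real.sqrt (∫ x, ‖g x‖ ^ 2 ∂μ) := by
  have hgn : MemLp (fun x => ‖g x‖) 2 μ := hg.norm
  have h1 : MemLp (fun _ : α => (1 : ℝ)) 2 μ := memLp_const 1
  set G : Lp ℝ 2 μ := hgn.toLp _ with hG
  set O : Lp ℝ 2 μ := h1.toLp _ with hO
  have hOc := h1.coeFn_toLp
  have hGc := hgn.coeFn_toLp
  have hOG : ⟪O, G⟫ = ∫ x, ‖g x‖ ∂μ := by
    rw [L2.inner_def]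
    refine integral_congr_ae ?_
    filter_upwards [hOc, hGc] with x hx hy
    rw [hO, hG, hx, hy]
    simp [RCLike.inner_apply]
  have hGG : ⟪G, G⟫ = ∫ x, ‖g x‖ ^ 2 ∂μ := by
    rw [L2.inner_def]
    refine integral_congr_ae ?_
    filter_upwards [hGc] with x hx
    rw [hG, hx]
    simp [RCLike.inner_apply, sq]
  have hOO : ⟪O, O⟫ = (μ Set.univ).toReal := by
    rw [L2.inner_def]
    have : ∫ (a : α), ⟪(O : α → ℝ) a, (O : α → ℝ) a⟫ ∂μ = ∫ (_ : α), (1:ℝ) ∂μ := by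
      refine integral_congr_ae ?_
      filter_upwards [hOc] with x hx
      rw [hO, hx]
      simp [RCLike.inner_apply]
    rw [this, MeasureTheory.integral_const, smul_eq_mul, mul_one, measureReal_def]
  have hnO : ‖O‖ = Real.sqrt (μ Set.univ).toReal := by
    rw [← hOO, real_inner_self_eq_norm_sq, Real.sqrt_sq (norm_nonneg _)]
  have hnG : ‖G‖ = Real.sqrt (∫ x, ‖g x‖ ^ 2 ∂μ) := by
    rw [← hGG, real_inner_self_eq_norm_sq, Real.sqrt_sq (norm_nonneg _)]
  calc ∫ x, ‖g x‖ ∂μ = ⟪O, G⟫ := hOG.symm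
    _ ≤ ‖O‖ * ‖G‖ := real_inner_le_norm O G
    _ = _ := by rw [hnO, hnG]

set_option maxHeartbeats 1000000 in
theorem stmt6 {d r : ℕ} (T γ : ℝ) (hT : 0 < T) (hγ : 0 < γ)
    (h : ℝ → EuclideanSpace ℝ (Fin r) →L[ℝ] EuclideanSpace ℝ (Fin d))
    (hh : ContinuousOn h (Set.Icc 0 T)) (M : ℝ) (hhb : ∀ t ∈ Set.Icc (0 : ℝ) T, ‖h t‖ ≤ M)
    (u : ℕ → ℝ → EuclideanSpace ℝ (Fin r)) (uLim : ℝ → EuclideanSpace ℝ (Fin r))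
    (hun : ∀ n, MemLp (u n) 2 (volume.restrict (Set.Icc 0 T)))
    (huLim : MemLp uLim 2 (volume.restrict (Set.Icc 0 T)))
    (hbn : ∀ n, (∫ t in (0 : ℝ)..T, ‖u n t‖ ^ 2) ≤ 2 * γ)
    (hbLim : (∫ t in (0 : ℝ)..T, ‖uLim t‖ ^ 2) ≤ 2 * γ)
    (hweak : ∀ v : ℝ → EuclideanSpace ℝ (Fin r),
      MemLp v 2 (volume.restrict (Set.Icc 0 T)) →
      Tendsto (fun n => ∫ s in (0 : ℝ)..T, ⟪u n s, v s⟫) atTop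
        (𝓝 (∫ s in (0 : ℝ)..T, ⟪uLim s, v s⟫))) :
    TendstoUniformlyOn (fun n t => ∫ s in (0 : ℝ)..t, h s (u n s - uLim s)) 0 atTop
      (Set.Icc 0 T) := by
  set K := Set.Icc (0:ℝ) T with hKdef
  set μ := volume.restrict K with hμdef
  set f : ℕ → ℝ → EuclideanSpace ℝ (Fin r) := fun n s => u n s - uLim s with hfdef
  have hM0 : 0 ≤ M := le_trans (norm_nonneg (h 0)) (hhb 0 ⟨le_rfl, hT.le⟩)
  have hf2 : ∀ n, MemLp (f n) 2 μ := fun n => (hun n).sub huLim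
  have hsq : ∀ n, Integrable (fun s => ‖f n s‖ ^ 2) μ := fun n => (hf2 n).norm.integrable_sq
  -- global L² bound
  have hIccIoc : ∀ g : ℝ → ℝ, (∫ s, g s ∂μ) = ∫ s in (0:ℝ)..T, g s := by
    intro g
    rw [hμdef, hKdef, integral_Icc_eq_integral_Ioc, intervalIntegral.integral_of_le hT.le]
  have h8 : ∀ n, (∫ s, ‖f n s‖ ^ 2 ∂μ) ≤ 8 * γ := by
    intro n
    have hInt1 : Integrable (fun s => ‖u n s‖ ^ 2) μ := (hun n).norm.integrable_sq
    have hInt2 : Integrable (fun s => ‖uLim s‖ ^ 2) μ := huLim.norm.integrable_sq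
    have hpt : ∀ s, ‖f n s‖ ^ 2 ≤ 2 * ‖u n s‖ ^ 2 + 2 * ‖uLim s‖ ^ 2 := by
      intro s
      have h1 : ‖f n s‖ ≤ ‖u n s‖ + ‖uLim s‖ := norm_sub_le _ _
      have h2 : ‖f n s‖ ^ 2 ≤ (‖u n s‖ + ‖uLim s‖) ^ 2 :=
        pow_le_pow_left₀ (norm_nonneg _) h1 2
      nlinarith [sq_nonneg (‖u n s‖ - ‖uLim s‖)]
    calc (∫ s, ‖f n s‖ ^ 2 ∂μ)
        ≤ ∫ s, (2 * ‖u n s‖ ^ 2 + 2 * ‖uLim s‖ ^ 2) ∂μ := by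
          refine integral_mono_ae (hsq n) ((hInt1.const_mul 2).add (hInt2.const_mul 2))
            (ae_of_all _ hpt)
      _ = 2 * (∫ s, ‖u n s‖ ^ 2 ∂μ) + 2 * (∫ s, ‖uLim s‖ ^ 2 ∂μ) := by
          rw [integral_add (hInt1.const_mul 2) (hInt2.const_mul 2),
            MeasureTheory.integral_const_mul, MeasureTheory.integral_const_mul]
      _ ≤ 2 * (2 * γ) + 2 * (2 * γ) := by
          have b1 : (∫ s, ‖u n s‖ ^ 2 ∂μ) ≤ 2 * γ := by rw [hIccIoc]; exact hbn n
          have b2 : (∫ s, ‖uLim s‖ ^ 2 ∂μ) ≤ 2 * γ := by rw [hIccIoc]; exact hbLim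
          linarith
      _ = 8 * γ := by ring
  -- integrability on subintervals
  have hsub : ∀ a b : ℝ, 0 ≤ a → b ≤ T → Set.Ioc a b ⊆ K := by
    intro a b ha hb s hs
    exact ⟨le_trans ha hs.1.le, le_trans hs.2 hb⟩
  have hrr : ∀ a b : ℝ, 0 ≤ a → b ≤ T →
      μ.restrict (Set.Ioc a b) = volume.restrict (Set.Ioc a b) := by
    intro a b ha hb
    rw [hμdef, Measure.restrict_restrict measurableSet_Ioc,
      Set.inter_eq_left.mpr (hsub a b ha hb)]
  have hfOn : ∀ n (a b : ℝ), 0 ≤ a → b ≤ T →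
      MemLp (f n) 2 (volume.restrict (Set.Ioc a b)) := by
    intro n a b ha hb
    have := (hf2 n).restrict (Set.Ioc a b)
    rwa [hrr a b ha hb] at this
  have hbnd : ∀ n (a b : ℝ), 0 ≤ a → b ≤ T →
      ∀ᵐ s ∂(volume.restrict (Set.Ioc a b)), ‖h s (f n s)‖ ≤ M * ‖f n s‖ := by
    intro n a b ha hb
    refine (ae_restrict_iff' measurableSet_Ioc).2 (ae_of_all _ fun s hs => ?_)
    exact le_trans ((h s).le_opNorm _)
      (mul_le_mul_of_nonneg_right (hhb s (hsub a b ha hb hs)) (norm_nonneg _))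
  have haesm : ∀ n (a b : ℝ), 0 ≤ a → b ≤ T →
      AEStronglyMeasurable (fun s => h s (f n s)) (volume.restrict (Set.Ioc a b)) := by
    intro n a b ha hb
    have hhm : AEStronglyMeasurable h (volume.restrict (Set.Ioc a b)) :=
      (hh.mono (hsub a b ha hb)).aestronglyMeasurable measurableSet_Ioc
    have hfm : AEStronglyMeasurable (f n) (volume.restrict (Set.Ioc a b)) :=
      (hfOn n a b ha hb).1
    exact isBoundedBilinearMap_apply.continuous.comp_aestronglyMeasurable (hhm.prodMk hfm)
  have hiOn : ∀ n (a b : ℝ), 0 ≤ a → b ≤ T →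
      IntegrableOn (fun s => h s (f n s)) (Set.Ioc a b) volume := by
    intro n a b ha hb
    have hfi : Integrable (f n) (volume.restrict (Set.Ioc a b)) :=
      (hfOn n a b ha hb).integrable one_le_two
    exact (hfi.norm.const_mul M).mono' (haesm n a b ha hb) (hbnd n a b ha hb)
  have hii : ∀ n (a b : ℝ), a ∈ K → b ∈ K →
      IntervalIntegrable (fun s => h s (f n s)) volume a b := by
    intro n a b ha hb
    rw [intervalIntegrable_iff]
    exact hiOn n _ _ (le_min ha.1 hb.1) (max_le ha.2 hb.2)
  -- the key Hölder estimate
  set C := M * Real.sqrt (8 * γ) with hCdef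
  have hC0 : 0 ≤ C := mul_nonneg hM0 (Real.sqrt_nonneg _)
  have key : ∀ n (a b : ℝ), 0 ≤ a → a ≤ b → b ≤ T →
      ‖∫ s in a..b, h s (f n s)‖ ≤ C * Real.sqrt (b - a) := by
    intro n a b ha hab hb
    rw [intervalIntegral.integral_of_le hab]
    have hfi : Integrable (f n) (volume.restrict (Set.Ioc a b)) :=
      (hfOn n a b ha hb).integrable one_le_two
    have step1 : ‖∫ s in Set.Ioc a b, h s (f n s)‖ ≤ ∫ s in Set.Ioc a b, ‖h s (f n s)‖ :=
      norm_integral_le_integral_norm _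
    have step2 : (∫ s in Set.Ioc a b, ‖h s (f n s)‖) ≤ ∫ s in Set.Ioc a b, M * ‖f n s‖ :=
      integral_mono_ae (hiOn n a b ha hb).norm (hfi.norm.const_mul M) (hbnd n a b ha hb)
    have step3 : (∫ s in Set.Ioc a b, M * ‖f n s‖) = M * ∫ s in Set.Ioc a b, ‖f n s‖ :=
      MeasureTheory.integral_const_mul _ _
    have hcs := cs_aux (volume.restrict (Set.Ioc a b))
      (g := fun s => ‖f n s‖) (hfOn n a b ha hb).norm
    have hμuniv : ((volume.restrict (Set.Ioc a b)) Set.univ).toReal = b - a := by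
      rw [Measure.restrict_apply_univ, Real.volume_Ioc, ENNReal.toReal_ofReal (by linarith)]
    have hsqle : (∫ s in Set.Ioc a b, ‖(‖f n s‖)‖ ^ 2) ≤ 8 * γ := by
      have hmono : (∫ s in Set.Ioc a b, ‖(‖f n s‖)‖ ^ 2) ≤ ∫ s, ‖f n s‖ ^ 2 ∂μ := by
        simp only [norm_norm]
        refine integral_mono_measure (Measure.restrict_mono (hsub a b ha hb) le_rfl)
          (ae_of_all _ fun s => by positivity) (hsq n)
      simpa using le_trans hmono (h8 n)
    have step4 : (∫ s in Set.Ioc a b, ‖f n s‖) ≤ Real.sqrt (b - a) * Real.sqrt (8 * γ) := by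
      have h1 : (∫ s in Set.Ioc a b, ‖f n s‖) = ∫ s in Set.Ioc a b, ‖(‖f n s‖)‖ := by
        simp [norm_norm]
      rw [h1]
      refine le_trans hcs ?_
      rw [hμuniv]
      exact mul_le_mul_of_nonneg_left (Real.sqrt_le_sqrt hsqle) (Real.sqrt_nonneg _)
    calc ‖∫ s in Set.Ioc a b, h s (f n s)‖
        ≤ ∫ s in Set.Ioc a b, M * ‖f n s‖ := le_trans step1 step2
      _ = M * ∫ s in Set.Ioc a b, ‖f n s‖ := step3
      _ ≤ M * (Real.sqrt (b - a) * Real.sqrt (8 * γ)) :=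
          mul_le_mul_of_nonneg_left step4 hM0
      _ = C * Real.sqrt (b - a) := by rw [hCdef]; ring
  -- estimate in both orders
  have est : ∀ n (a b : ℝ), a ∈ K → b ∈ K →
      ‖∫ s in a..b, h s (f n s)‖ ≤ C * Real.sqrt |b - a| := by
    intro n a b ha hb
    rcases le_total a b with hab | hba
    · rw [abs_of_nonneg (by linarith)]
      exact key n a b ha.1 hab hb.2
    · rw [intervalIntegral.integral_symm, norm_neg, abs_of_nonpos (by linarith), neg_sub]
      exact key n b a hb.1 hba ha.2
  -- pointwise convergence
  have hptwise : ∀ t ∈ K, Tendsto (fun n => ∫ s in (0:ℝ)..t, h s (f n s)) atTop (𝓝 0) := by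
    intro t ht
    obtain ⟨ht0, htT⟩ := ht
    have hinner : ∀ e : EuclideanSpace ℝ (Fin d),
        Tendsto (fun n => ⟪e, ∫ s in (0:ℝ)..t, h s (f n s)⟫) atTop (𝓝 0) := by
      intro e
      set w : ℝ → EuclideanSpace ℝ (Fin r) :=
        fun s => (ContinuousLinearMap.adjoint (h s)) e with hwdef
      have hwc : ContinuousOn w K := by
        refine ContinuousOn.clm_apply ?_ continuousOn_const
        exact (ContinuousLinearMap.adjoint.continuous).comp_continuousOn hh
      have hwb : ∀ s ∈ K, ‖w s‖ ≤ M * ‖e‖ := by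
        intro s hs
        calc ‖w s‖ ≤ ‖ContinuousLinearMap.adjoint (h s)‖ * ‖e‖ :=
              (ContinuousLinearMap.adjoint (h s)).le_opNorm e
          _ = ‖h s‖ * ‖e‖ := by rw [ContinuousLinearMap.adjoint.norm_map]
          _ ≤ M * ‖e‖ := mul_le_mul_of_nonneg_right (hhb s hs) (norm_nonneg _)
      set v : ℝ → EuclideanSpace ℝ (Fin r) := Set.indicator (Set.Ioc 0 t) w with hvdef
      have hv2 : MemLp v 2 μ := by
        refine MemLp.of_bound
          (((hwc.aestronglyMeasurable measurableSet_Icc).indicator measurableSet_Ioc))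
          (M * ‖e‖) (ae_of_all _ fun s => ?_)
        by_cases hs : s ∈ Set.Ioc (0:ℝ) t
        · rw [hvdef]; rw [Set.indicator_of_mem hs]
          exact hwb s ⟨hs.1.le, hs.2.trans htT⟩
        · rw [hvdef]; rw [Set.indicator_of_notMem hs]
          simp [mul_nonneg hM0 (norm_nonneg e)]
      have hred : ∀ g : ℝ → EuclideanSpace ℝ (Fin r),
          (∫ s in (0:ℝ)..T, ⟪g s, v s⟫) = ∫ s in Set.Ioc (0:ℝ) t, ⟪g s, w s⟫ := by
        intro g
        rw [intervalIntegral.integral_of_le hT.le]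
        have hind : (fun s => ⟪g s, v s⟫) =
            Set.indicator (Set.Ioc (0:ℝ) t) (fun s => ⟪g s, w s⟫) := by
          funext s
          by_cases hs : s ∈ Set.Ioc (0:ℝ) t
          · simp [hvdef, Set.indicator_of_mem hs]
          · simp [hvdef, Set.indicator_of_notMem hs]
        rw [hind, MeasureTheory.integral_indicator measurableSet_Ioc,
          Measure.restrict_restrict measurableSet_Ioc,
          Set.inter_eq_left.mpr (Set.Ioc_subset_Ioc_right htT)]
      have hwk := hweak v hv2
      rw [hred uLim] at hwk
      have hwk2 : Tendsto (fun n => ∫ s in Set.Ioc (0:ℝ) t, ⟪u n s, w s⟫) atTop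
          (𝓝 (∫ s in Set.Ioc (0:ℝ) t, ⟪uLim s, w s⟫)) := by
        refine hwk.congr fun n => ?_
        rw [hred (u n)]
      have hdiff : Tendsto (fun n => (∫ s in Set.Ioc (0:ℝ) t, ⟪u n s, w s⟫)
          - ∫ s in Set.Ioc (0:ℝ) t, ⟪uLim s, w s⟫) atTop (𝓝 0) := by
        simpa using hwk2.sub_const (∫ s in Set.Ioc (0:ℝ) t, ⟪uLim s, w s⟫)
      -- identify the inner products
      have hwm : AEStronglyMeasurable w (volume.restrict (Set.Ioc (0:ℝ) t)) :=
        (hwc.mono (hsub 0 t le_rfl htT)).aestronglyMeasurable measurableSet_Ioc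
      have hIg : ∀ g : ℝ → EuclideanSpace ℝ (Fin r), MemLp g 2 μ →
          Integrable (fun s => ⟪g s, w s⟫) (volume.restrict (Set.Ioc (0:ℝ) t)) := by
        intro g hg
        have hg' : MemLp g 2 (volume.restrict (Set.Ioc (0:ℝ) t)) := by
          have := hg.restrict (Set.Ioc (0:ℝ) t)
          rwa [hrr 0 t le_rfl htT] at this
        have hgi : Integrable g (volume.restrict (Set.Ioc (0:ℝ) t)) :=
          hg'.integrable one_le_two
        refine (hgi.norm.const_mul (M * ‖e‖)).mono' (hg'.1.inner hwm) ?_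
        refine (ae_restrict_iff' measurableSet_Ioc).2 (ae_of_all _ fun s hs => ?_)
        calc ‖⟪g s, w s⟫‖ ≤ ‖g s‖ * ‖w s‖ := norm_inner_le_norm _ _
          _ ≤ ‖g s‖ * (M * ‖e‖) := mul_le_mul_of_nonneg_left
              (hwb s (hsub 0 t le_rfl htT hs)) (norm_nonneg _)
          _ = M * ‖e‖ * ‖g s‖ := by ring
      have hid : ∀ n, ⟪e, ∫ s in (0:ℝ)..t, h s (f n s)⟫
          = (∫ s in Set.Ioc (0:ℝ) t, ⟪u n s, w s⟫)
            - ∫ s in Set.Ioc (0:ℝ) t, ⟪uLim s, w s⟫ := by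
        intro n
        rw [intervalIntegral.integral_of_le ht0]
        rw [← integral_inner (hiOn n 0 t le_rfl htT) e]
        have hptw : ∀ s, ⟪e, h s (f n s)⟫ = ⟪f n s, w s⟫ := fun s => by
          rw [hwdef, ← ContinuousLinearMap.adjoint_inner_left (h s) (f n s) e]
          exact real_inner_comm _ _
        rw [integral_congr_ae (ae_of_all _ hptw)]
        have : (fun s => ⟪f n s, w s⟫) = fun s => ⟪u n s, w s⟫ - ⟪uLim s, w s⟫ := by
          funext s; rw [hfdef]; exact inner_sub_left _ _ _
        rw [this, integral_sub (hIg (u n) (hun n)) (hIg uLim huLim)]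
      exact Tendsto.congr (fun n => (hid n).symm) hdiff
    -- from inner convergence to convergence
    set b := EuclideanSpace.basisFun (Fin d) ℝ with hbdef
    have hsum : Tendsto (fun n => ∑ i, ⟪b i, ∫ s in (0:ℝ)..t, h s (f n s)⟫ • b i)
        atTop (𝓝 (∑ i : Fin d, (0:ℝ) • b i)) := by
      refine tendsto_finset_sum _ fun i _ => ?_
      exact (hinner (b i)).smul_const (b i)
    have hzero : (∑ i : Fin d, (0:ℝ) • b i) = 0 := by simp
    rw [hzero] at hsum
    refine hsum.congr fun n => ?_
    exact b.sum_repr' _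
  -- assembly
  rw [Metric.tendstoUniformlyOn_iff]
  intro ε hε
  set δ := (ε / (2 * (C + 1))) ^ 2 with hδdef
  have hCδ : C * Real.sqrt δ < ε / 2 := by
    rw [hδdef, Real.sqrt_sq (by positivity)]
    have h1 : (0:ℝ) < C + 1 := by linarith
    have h2 : (C + 1) * (ε / (2 * (C + 1))) = ε / 2 := by
      field_simp
    have hx : 0 < ε / (2 * (C + 1)) := by positivity
    nlinarith
  have hδ0 : 0 < δ := by positivity
  -- finite subcover
  have hKc : IsCompact K := isCompact_Icc
  have hcover : K ⊆ ⋃ c ∈ K, Metric.ball c δ := fun x hx =>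
    Set.mem_biUnion hx (Metric.mem_ball_self hδ0)
  obtain ⟨S, hS⟩ := hKc.elim_finite_subcover_image (fun c _ => Metric.isOpen_ball) hcover
  obtain ⟨hSK, hSfin, hScov⟩ := hS
  have hev : ∀ᶠ n in atTop, ∀ c ∈ hSfin.toFinset, ‖∫ s in (0:ℝ)..c, h s (f n s)‖ < ε / 2 := by
    rw [Filter.eventually_all_finset]
    intro c hc
    have hcK : c ∈ K := hSK (hSfin.mem_toFinset.mp hc)
    have := (hptwise c hcK).norm
    simp only [norm_zero] at this
    exact this.eventually_lt_const (by linarith)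
  filter_upwards [hev] with n hn
  intro x hx
  obtain ⟨c, hcS, hxc⟩ : ∃ c ∈ S, x ∈ Metric.ball c δ := by
    have := hScov hx
    simpa using this
  have hcK : c ∈ K := hSK hcS
  have hsplit : (∫ s in (0:ℝ)..x, h s (f n s))
      = (∫ s in (0:ℝ)..c, h s (f n s)) + ∫ s in c..x, h s (f n s) :=
    (intervalIntegral.integral_add_adjacent_intervals
      (hii n 0 c ⟨le_rfl, hT.le⟩ hcK) (hii n c x hcK hx)).symm
  have hdist : |x - c| < δ := by
    rw [Metric.mem_ball, Real.dist_eq] at hxc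
    exact hxc
  have hbound : ‖∫ s in (0:ℝ)..x, h s (f n s)‖ < ε := by
    rw [hsplit]
    calc ‖(∫ s in (0:ℝ)..c, h s (f n s)) + ∫ s in c..x, h s (f n s)‖
        ≤ ‖∫ s in (0:ℝ)..c, h s (f n s)‖ + ‖∫ s in c..x, h s (f n s)‖ := norm_add_le _ _
      _ < ε / 2 + C * Real.sqrt |x - c| := by
          have h1 := hn c (hSfin.mem_toFinset.mpr hcS)
          have h2 := est n c x hcK hx
          linarith
      _ ≤ ε / 2 + C * Real.sqrt δ := by
          have := Real.sqrt_le_sqrt hdist.le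
          nlinarith [Real.sqrt_nonneg |x - c|]
      _ < ε / 2 + ε / 2 := by linarith
      _ = ε := by ring
  have hgoal : dist ((0 : ℝ → EuclideanSpace ℝ (Fin d)) x)
      (∫ s in (0:ℝ)..x, h s (f n s)) < ε := by
    rw [Pi.zero_apply, dist_zero_left]
    exact hbound
  exact hgoal
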